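/- arXiv:1902.04209 — 2 statements merged into one kernel-verified Lean document; each statement's English description precedes it below -/
import Mathlib

section
/- Let J̄ : ℝ × ℝ → ℝ be the map J̄(ε, τ) = −((A(τ)·k·ε − e*)²) with A(τ) = c₁ sin(ωτ − π/2) + c₂, where 0 < c₁ < c₂, k > 0, e* > 0. Then for each τ the unique maximiser of ε ↦ J̄(ε, τ) over ℝ is ε*(τ) = e*/(A(τ)·k), and moreover (∂J̄/∂ε)(ε, τ)·(ε − ε*(τ)) = −2 A(τ)² k² (ε − ε*(τ))² ≤ −2(c₂ − c₁)² k² (ε − ε*(τ))² for all ε, τ. -/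
open Real

theorem scenario_one_cost_map
    (c₁ c₂ k estar ω : ℝ) (hc₁ : 0 < c₁) (hc : c₁ < c₂) (hk : 0 < k) (he : 0 < estar)
    (A : ℝ → ℝ) (hA : ∀ τ, A τ = c₁ * Real.sin (ω * τ - π / 2) + c₂)
    (J : ℝ → ℝ → ℝ) (hJ : ∀ ε τ, J ε τ = -((A τ * k * ε - estar) ^ 2))
    (εstar : ℝ → ℝ) (hεs : ∀ τ, εstar τ = estar / (A τ * k)) :
    ∀ τ : ℝ,
      (∀ ε : ℝ, J ε τ ≤ J (εstar τ) τ) ∧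
      (∀ ε : ℝ, J ε τ = J (εstar τ) τ → ε = εstar τ) ∧
      (∀ ε : ℝ,
        HasDerivAt (fun e => J e τ) (-(2 * (A τ * k * ε - estar) * (A τ * k))) ε ∧
        (-(2 * (A τ * k * ε - estar) * (A τ * k))) * (ε - εstar τ) =
          -(2 * (A τ) ^ 2 * k ^ 2 * (ε - εstar τ) ^ 2) ∧
        (-(2 * (A τ * k * ε - estar) * (A τ * k))) * (ε - εstar τ) ≤
          -(2 * (c₂ - c₁) ^ 2 * k ^ 2 * (ε - εstar τ) ^ 2)) := by
  intro τ
  have hsin : -1 ≤ Real.sin (ω * τ - π / 2) := Real.neg_one_le_sin _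
  have hsin' : Real.sin (ω * τ - π / 2) ≤ 1 := Real.sin_le_one _
  have hApos : c₂ - c₁ ≤ A τ := by rw [hA]; nlinarith
  have hA0 : 0 < A τ := by linarith
  have hAk : A τ * k ≠ 0 := by positivity
  have hcancel : A τ * k * εstar τ = estar := by
    rw [hεs]; field_simp
  have hstar : J (εstar τ) τ = 0 := by
    rw [hJ, hcancel]; ring
  refine ⟨?_, ?_, ?_⟩
  · intro ε
    rw [hJ, hstar]
    nlinarith [sq_nonneg (A τ * k * ε - estar)]
  · intro ε hEq
    rw [hJ, hstar] at hEq
    have h0 : A τ * k * ε - estar = 0 := by nlinarith [sq_nonneg (A τ * k * ε - estar)]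
    have : A τ * k * ε = A τ * k * εstar τ := by rw [hcancel]; linarith
    exact mul_left_cancel₀ hAk this
  · intro ε
    refine ⟨?_, ?_, ?_⟩
    · have h1 : HasDerivAt (fun e : ℝ => A τ * k * e - estar) (A τ * k) ε := by
        simpa using ((hasDerivAt_id ε).const_mul (A τ * k)).sub_const estar
      have h2 := (h1.fun_pow 2).fun_neg
      have h3 : (fun e : ℝ => J e τ) = fun e : ℝ => -((A τ * k * e - estar) ^ 2) := by
        funext e; exact hJ e τ
      rw [h3]
      exact h2.congr_deriv (by ring)
    · have hd : A τ * k * ε - estar = A τ * k * (ε - εstar τ) := by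
        rw [mul_sub, hcancel]
      rw [hd]; ring
    · have hd : A τ * k * ε - estar = A τ * k * (ε - εstar τ) := by
        rw [mul_sub, hcancel]
      rw [hd]
      have hA2 : (c₂ - c₁) ^ 2 ≤ (A τ) ^ 2 := by nlinarith
      nlinarith [mul_nonneg (sub_nonneg.2 hA2) (sq_nonneg ((ε - εstar τ) * k))]
end

section
/- Suppose ε̃ : [0,∞) → ℝ is continuous, satisfies |ε̃(τ) − ε̃(0)| ≤ ρ⁺ for τ ∈ [0, τ*], is monotone on [τ*, τ*+τ**] converging toward the interval [−ν, ν], and satisfies |ε̃(τ)| ≤ ν for τ ≥ τ* + τ**. Let ε(τ) = ε̃(τ) + ε*(τ) + a sin(ωτ) where ε* satisfies |dε*/dτ| ≤ k/N, ε̃(0) ∈ [ν⁺ − ε*(0), ε̄ − ν⁺ − ε*(0)], and ε*(τ) ∈ [ε̲*, ε̄*] for all τ. If a < min{ν⁺ − ρ⁺, ε̲* − ν, ε̄ − ε̄* − ν} and k(τ* + τ**)/N < ν⁺ − ρ⁺ − a, then 0 < ε(τ) < ε̄ for all τ ≥ 0. -/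
open Real Set

theorem scan_rate_stays_admissible
    (εt εstar εstar' : ℝ → ℝ)
    (ρplus τs τss ν νplus a ω k N εbar εlo εhi : ℝ)
    (hτs : 0 < τs) (hτss : 0 ≤ τss) (hν : 0 < ν) (hνplus : 0 < νplus)
    (hρplus : 0 < ρplus) (hρν : ρplus < νplus)
    (ha : 0 < a) (hk : 0 < k) (hN : 0 < N) (hεbar : 0 < εbar) (hεlohi : εlo ≤ εhi)
    (hcont : ContinuousOn εt (Set.Ici 0))
    (htransient : ∀ τ ∈ Set.Icc (0:ℝ) τs, |εt τ - εt 0| ≤ ρplus)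
    (hmono : ∀ τ ∈ Set.Icc τs (τs + τss),
      min (εt τs) (-ν) ≤ εt τ ∧ εt τ ≤ max (εt τs) ν)
    (hult : ∀ τ : ℝ, τs + τss ≤ τ → |εt τ| ≤ ν)
    (hεstar_deriv : ∀ τ : ℝ, HasDerivAt εstar (εstar' τ) τ)
    (hεstar_slow : ∀ τ : ℝ, |εstar' τ| ≤ k / N)
    (hεstar_range : ∀ τ : ℝ, εstar τ ∈ Set.Icc εlo εhi)
    (hinit : εt 0 ∈ Set.Icc (νplus - εstar 0) (εbar - νplus - εstar 0))
    (ha_small : a < min (νplus - ρplus) (min (εlo - ν) (εbar - εhi - ν)))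
    (hdrift : k * (τs + τss) / N < νplus - ρplus - a) :
    ∀ τ : ℝ, 0 ≤ τ →
      0 < εt τ + εstar τ + a * Real.sin (ω * τ) ∧
      εt τ + εstar τ + a * Real.sin (ω * τ) < εbar := by
  have hkN : 0 ≤ k / N := le_of_lt (div_pos hk hN)
  have key : ∀ τ : ℝ, 0 ≤ τ → τ ≤ τs + τss → |εstar τ - εstar 0| ≤ k * (τs + τss) / N := by
    intro τ h0 h1
    have h := convex_univ.norm_image_sub_le_of_norm_hasDerivWithin_le
      (f := εstar) (f' := εstar') (C := k / N)
      (fun x _ => (hεstar_deriv x).hasDerivWithinAt)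
      (fun x _ => by simpa [Real.norm_eq_abs] using hεstar_slow x)
      (Set.mem_univ 0) (Set.mem_univ τ)
    rw [Real.norm_eq_abs, Real.norm_eq_abs, sub_zero, abs_of_nonneg h0] at h
    calc |εstar τ - εstar 0| ≤ k / N * τ := h
      _ ≤ k / N * (τs + τss) := by nlinarith
      _ = k * (τs + τss) / N := by ring
  have ha1 : a < νplus - ρplus := lt_of_lt_of_le ha_small (min_le_left _ _)
  have ha2 : a < εlo - ν :=
    lt_of_lt_of_le ha_small (le_trans (min_le_right _ _) (min_le_left _ _))
  have ha3 : a < εbar - εhi - ν :=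
    lt_of_lt_of_le ha_small (le_trans (min_le_right _ _) (min_le_right _ _))
  intro τ hτ
  have hB : |a * Real.sin (ω * τ)| ≤ a := by
    rw [abs_mul, abs_of_pos ha]
    exact mul_le_of_le_one_right ha.le (abs_sin_le_one _)
  obtain ⟨hB1, hB2⟩ := abs_le.mp hB
  obtain ⟨hr1, hr2⟩ := hεstar_range τ
  obtain ⟨hi1, hi2⟩ := hinit
  rcases le_or_gt τ τs with hle | hgt
  · -- transient phase
    obtain ⟨ht1, ht2⟩ := abs_le.mp (htransient τ ⟨hτ, hle⟩)
    obtain ⟨hs1, hs2⟩ := abs_le.mp (key τ hτ (by linarith))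
    constructor <;> linarith
  rcases le_or_gt τ (τs + τss) with hle2 | hgt2
  · -- monotone phase
    obtain ⟨hm1, hm2⟩ := hmono τ ⟨hgt.le, hle2⟩
    obtain ⟨hs1, hs2⟩ := abs_le.mp (key τ hτ hle2)
    obtain ⟨hts1, hts2⟩ := abs_le.mp (htransient τs ⟨hτs.le, le_refl _⟩)
    constructor
    · rcases le_total (εt τs) (-ν) with hc | hc
      · rw [min_eq_left hc] at hm1; linarith
      · rw [min_eq_right hc] at hm1; linarith
    · rcases le_total (εt τs) ν with hc | hc
      · rw [max_eq_right hc] at hm2; linarith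
      · rw [max_eq_left hc] at hm2; linarith
  · -- ultimate phase
    obtain ⟨hu1, hu2⟩ := abs_le.mp (hult τ hgt2.le)
    constructor <;> linarith
end
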